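/- Let A = 0, and for each B > 0 with B·D ≥ 0 and B·C > 0 let ρ^B be the solution of the Riccati equation (ρ^B)' - B·(ρ^B)² + C = 0 with ρ^B(T) = D. Then for every fixed t ∈ [0,T], ρ^B(t) → D + C·(T-t) as B → 0⁺, i.e. it converges to the solution of ρ' + C = 0 with ρ(T) = D. -/

import Mathlib

open Real Set Filter

theorem stmt_4 (T C D : ℝ) (hT : 0 < T) (hC : 0 < C) (hD : 0 ≤ D)
    (δp δm : ℝ → ℝ)
    (hδp : ∀ B, δp B = Real.sqrt (B * C))
    (hδm : ∀ B, δm B = -Real.sqrt (B * C))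
    (ρ : ℝ → ℝ → ℝ)
    (hρ : ∀ B t, ρ B t =
      (C * (1 - Real.exp (-(δp B - δm B) * (T - t))) +
        D * (δp B - δm B * Real.exp (-(δp B - δm B) * (T - t)))) /
      (B * D * (1 - Real.exp (-(δp B - δm B) * (T - t))) +
        δp B * Real.exp (-(δp B - δm B) * (T - t)) - δm B)) :
    ∀ t ∈ Icc (0 : ℝ) T,
      Tendsto (fun B => ρ B t) (nhdsWithin 0 (Ioi 0)) (nhds (D + C * (T - t))) := by
  intro t ht
  set τ := T - t with hτ
  have hτ0 : 0 ≤ τ := by simp [hτ]; linarith [ht.2]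
  set g : ℝ → ℝ := fun s =>
    (C * ((1 - Real.exp ((-2*τ)*s))/s) + D * (1 + Real.exp ((-2*τ)*s))) /
    (s/C * D * (1 - Real.exp ((-2*τ)*s)) + (1 + Real.exp ((-2*τ)*s))) with hg_def
  -- limit of (1 - exp((-2τ)s))/s as s → 0
  have hderiv : HasDerivAt (fun s : ℝ => 1 - Real.exp ((-2*τ)*s)) (2*τ) 0 := by
    have h1 : HasDerivAt (fun s : ℝ => (-2*τ)*s) (-2*τ) 0 := by
      simpa using (hasDerivAt_id (0:ℝ)).const_mul (-2*τ)
    have h3 := (h1.exp).const_sub 1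
    refine h3.congr_deriv ?_
    simp
  have hslope : Tendsto (fun s => (1 - Real.exp ((-2*τ)*s))/s)
      (nhdsWithin 0 (Ioi 0)) (nhds (2*τ)) := by
    have := hasDerivAt_iff_tendsto_slope.mp hderiv
    have h2 := this.mono_left (nhdsWithin_mono 0 (fun x hx => ne_of_gt hx : Ioi (0:ℝ) ⊆ {0}ᶜ))
    refine h2.congr (fun s => ?_)
    simp [slope_def_field, div_eq_div_iff]
  have hE : Tendsto (fun s => Real.exp ((-2*τ)*s)) (nhdsWithin 0 (Ioi 0)) (nhds 1) := by
    have : ContinuousAt (fun s : ℝ => Real.exp ((-2*τ)*s)) 0 := by fun_prop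
    have := this.tendsto.mono_left (nhdsWithin_le_nhds (s := Ioi (0:ℝ)))
    simpa using this
  have hid : Tendsto (fun s : ℝ => s) (nhdsWithin 0 (Ioi 0)) (nhds 0) :=
    tendsto_id.mono_left (nhdsWithin_le_nhds (s := Ioi (0:ℝ)))
  have hg : Tendsto g (nhdsWithin 0 (Ioi 0)) (nhds (D + C*τ)) := by
    have hnum : Tendsto (fun s => C * ((1 - Real.exp ((-2*τ)*s))/s) + D * (1 + Real.exp ((-2*τ)*s)))
        (nhdsWithin 0 (Ioi 0)) (nhds (C*(2*τ) + D*(1+1))) :=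
      ((tendsto_const_nhds.mul hslope)).add (tendsto_const_nhds.mul (tendsto_const_nhds.add hE))
    have hden : Tendsto (fun s => s/C * D * (1 - Real.exp ((-2*τ)*s)) + (1 + Real.exp ((-2*τ)*s)))
        (nhdsWithin 0 (Ioi 0)) (nhds ((0/C) * D * (1-1) + (1+1))) :=
      (((hid.div_const C).mul_const D).mul (tendsto_const_nhds.sub hE)).add
        (tendsto_const_nhds.add hE)
    have := hnum.div hden (by norm_num)
    convert this using 2
    · rfl
    field_simp
    ring
  have hs : Tendsto (fun B => Real.sqrt (B*C)) (nhdsWithin 0 (Ioi 0)) (nhdsWithin 0 (Ioi 0)) := by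
    rw [tendsto_nhdsWithin_iff]
    constructor
    · have : ContinuousAt (fun B : ℝ => Real.sqrt (B*C)) 0 := by fun_prop
      have := this.tendsto.mono_left (nhdsWithin_le_nhds (s := Ioi (0:ℝ)))
      simpa using this
    · filter_upwards [self_mem_nhdsWithin] with B hB
      exact Real.sqrt_pos.mpr (mul_pos hB hC)
  have heq : ∀ᶠ B in nhdsWithin 0 (Ioi 0), ρ B t = g (Real.sqrt (B*C)) := by
    filter_upwards [self_mem_nhdsWithin] with B hB
    set s := Real.sqrt (B*C) with hs_def
    have hs0 : 0 < s := Real.sqrt_pos.mpr (mul_pos hB hC)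
    have hs2 : s^2 = B*C := Real.sq_sqrt (le_of_lt (mul_pos hB hC))
    rw [hρ, hδp, hδm]
    simp only [hg_def]
    have harg : -(s - -s)*(T-t) = (-2*τ)*s := by rw [hτ]; ring
    rw [harg]
    set E := Real.exp ((-2*τ)*s) with hE_def
    have hEpos : 0 < E := Real.exp_pos _
    have hE1 : E ≤ 1 := by
      rw [hE_def]
      apply Real.exp_le_one_iff.mpr
      have : (-2*τ)*s ≤ 0 := mul_nonpos_of_nonpos_of_nonneg (by linarith) hs0.le
      exact this
    clear_value E
    have hd1 : B*D*(1-E) + s*E - -s ≠ 0 := by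
      have h1 : 0 ≤ B*D*(1-E) :=
        mul_nonneg (mul_nonneg (le_of_lt hB) hD) (by linarith)
      nlinarith
    have hd2 : s/C*D*(1-E) + (1+E) ≠ 0 := by
      have : 0 ≤ s/C*D*(1-E) := by
        apply mul_nonneg (mul_nonneg (by positivity) hD); linarith
      nlinarith
    rw [div_eq_div_iff hd1 hd2]
    have hB' : B = s^2/C := by field_simp [hs2]; exact hs2.symm
    rw [hB']
    field_simp
    rw [Real.sqrt_sq hs0.le]
    ring
  exact (hg.comp hs).congr' (heq.mono fun B h => h.symm)
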